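/- Let Q be the cone of Hermitian (2ν+K)×(2ν+K) matrices M such that there exists a positive semidefinite Hermitian ν×ν matrix X with M ⪰ [[0,X,0],[X,0,0],[0,0,0]]. Then the dual cone Q* (the set of Hermitian Y with tr(QY) ≥ 0 for all Q in Q) equals the set of matrices of the form [F; G; V]·[F; G; V]* where F, G are ν×m complex matrices, V is K×m, m = 2ν+K, and F·G* + G·F* is positive semidefinite. -/

import Mathlib

open Matrix
open scoped ComplexOrder

open scoped MatrixOrder Matrix.Norms.L2Operator in
lemma Matrix.posSemidef_iff_eq_transpose_mul_self {n : Type*} [Fintype n] [DecidableEq n]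
    {A : Matrix n n ℂ} : A.PosSemidef ↔ ∃ B : Matrix n n ℂ, A = Bᴴ * B := by
  constructor
  · intro hA
    obtain ⟨B, hB⟩ := CStarAlgebra.nonneg_iff_eq_star_mul_self.mp hA.nonneg
    exact ⟨B, hB⟩
  · rintro ⟨B, rfl⟩
    exact Matrix.posSemidef_conjTranspose_mul_self B

lemma trace_psd_nonneg {n : Type*} [Fintype n] [DecidableEq n] {A : Matrix n n ℂ}
    (hA : A.PosSemidef) : 0 ≤ A.trace := by
  rw [Matrix.trace]
  apply Finset.sum_nonneg
  intro i _
  have := hA.dotProduct_mulVec_nonneg (Pi.single i 1)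
  simpa [Matrix.mulVec_single, dotProduct, Pi.single_apply] using this

lemma trace_mul_psd_nonneg {n : Type*} [Fintype n] [DecidableEq n] {A B : Matrix n n ℂ}
    (hA : A.PosSemidef) (hB : B.PosSemidef) : 0 ≤ (A * B).trace := by
  obtain ⟨C, rfl⟩ := Matrix.posSemidef_iff_eq_transpose_mul_self.mp hA
  rw [Matrix.mul_assoc, Matrix.trace_mul_comm]
  exact trace_psd_nonneg (hB.mul_mul_conjTranspose_same C)

lemma psd_of_dual {n : Type*} [Fintype n] [DecidableEq n] {H : Matrix n n ℂ}
    (hH : H.IsHermitian)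
    (h : ∀ X : Matrix n n ℂ, X.PosSemidef → 0 ≤ ((X * H).trace).re) : H.PosSemidef := by
  refine Matrix.PosSemidef.of_dotProduct_mulVec_nonneg hH fun x => ?_
  set q := star x ⬝ᵥ H *ᵥ x with hq
  have hreal : star q = q := by
    simp only [hq, dotProduct, Matrix.mulVec, star_sum, star_mul', star_star,
      Finset.mul_sum, Pi.star_apply]
    rw [Finset.sum_comm]
    refine Finset.sum_congr rfl fun i _ => Finset.sum_congr rfl fun j _ => ?_
    rw [← hH.apply i j]
    ring
  set X : Matrix n n ℂ := Matrix.of fun i j => x i * star (x j) with hX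
  have hXpsd : X.PosSemidef := by
    refine Matrix.PosSemidef.of_dotProduct_mulVec_nonneg ?_ ?_
    · ext i j
      simp [hX, Matrix.conjTranspose_apply, mul_comm]
    · intro y
      have h1 : star y ⬝ᵥ X *ᵥ y = (∑ a, star (y a) * x a) * (∑ i, star (x i) * y i) := by
        rw [Finset.sum_mul_sum]
        simp only [dotProduct, Matrix.mulVec, hX, Matrix.of_apply, Finset.mul_sum,
          Pi.star_apply]
        exact Finset.sum_congr rfl fun a _ => Finset.sum_congr rfl fun i _ => by ring
      have h2 : (∑ a, star (y a) * x a) = star (∑ i, star (x i) * y i) := by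
        simp only [star_sum, star_mul', star_star]
        exact Finset.sum_congr rfl fun a _ => mul_comm _ _
      rw [h1, h2]
      exact star_mul_self_nonneg _
  have htr : (X * H).trace = q := by
    simp only [hq, Matrix.trace, Matrix.diag, Matrix.mul_apply, hX, Matrix.of_apply,
      dotProduct, Matrix.mulVec, Finset.mul_sum, Pi.star_apply]
    rw [Finset.sum_comm]
    refine Finset.sum_congr rfl fun j _ => Finset.sum_congr rfl fun i _ => by ring
  have h0 := h X hXpsd
  rw [htr] at h0
  have him : q.im = 0 := by
    have h2 := congrArg Complex.im hreal
    simp only [Complex.star_def, Complex.conj_im] at h2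
    linarith
  rw [Complex.le_def]
  exact ⟨by simpa using h0, by simp [him]⟩


/-- The Hermitian block matrix `[[0,X,0],[X,0,0],[0,0,0]]` with blocks of sizes ν, ν, K. -/
def blkQ (ν K : ℕ) (X : Matrix (Fin ν) (Fin ν) ℂ) :
    Matrix (Fin ν ⊕ (Fin ν ⊕ Fin K)) (Fin ν ⊕ (Fin ν ⊕ Fin K)) ℂ :=
  Matrix.fromBlocks 0 (Matrix.fromCols X 0) (Matrix.fromRows X 0) 0

/-- The cone `Q` of Hermitian matrices `M` of size `2ν+K` such that
`M ⪰ [[0,X,0],[X,0,0],[0,0,0]]` for some positive semidefinite Hermitian `X`. -/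
def Qset (ν K : ℕ) : Set (Matrix (Fin ν ⊕ (Fin ν ⊕ Fin K)) (Fin ν ⊕ (Fin ν ⊕ Fin K)) ℂ) :=
  {M | M.IsHermitian ∧ ∃ X : Matrix (Fin ν) (Fin ν) ℂ, X.PosSemidef ∧ (M - blkQ ν K X).PosSemidef}

/-- The dual cone of a set of matrices, with respect to the trace inner product
`⟨A, B⟩ = tr (A B)` on Hermitian matrices. -/
def dualSet {d : Type*} [Fintype d] (S : Set (Matrix d d ℂ)) : Set (Matrix d d ℂ) :=
  {Z | Z.IsHermitian ∧ ∀ Q ∈ S, 0 ≤ ((Q * Z).trace).re}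

/-- Characterization of the dual cone `Q*`: it consists exactly of the matrices
`[F; G; V]·[F; G; V]*` with `F`, `G` of size `ν × m`, `V` of size `K × m`, `m = 2ν + K`,
and `F·G* + G·F*` positive semidefinite. -/

lemma trace_blkQ_mul (ν K : ℕ) (X : Matrix (Fin ν) (Fin ν) ℂ)
    (Z : Matrix (Fin ν ⊕ (Fin ν ⊕ Fin K)) (Fin ν ⊕ (Fin ν ⊕ Fin K)) ℂ) :
    (blkQ ν K X * Z).trace =
      (X * (Z.submatrix Sum.inl (Sum.inr ∘ Sum.inl) +
            Z.submatrix (Sum.inr ∘ Sum.inl) Sum.inl)).trace := by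
  simp only [Matrix.trace, Matrix.diag, Matrix.mul_apply, blkQ, Matrix.fromBlocks,
    Matrix.fromRows_apply_inl, Matrix.fromRows_apply_inr, Matrix.fromCols, Matrix.submatrix_apply, Matrix.add_apply,
    Fintype.sum_sum_type, Matrix.of_apply, Sum.elim_inl, Sum.elim_inr, Matrix.zero_apply,
    zero_mul, Finset.sum_const_zero, add_zero, zero_add, Function.comp, mul_add,
    Finset.sum_add_distrib]

lemma blkQ_zero (ν K : ℕ) : blkQ ν K 0 = 0 := by
  ext p q
  rcases p with a | b <;> rcases q with c | d <;>
    first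
    | rfl
    | (rcases d with d | d <;> simp [blkQ, Matrix.fromCols])
    | (rcases b with b | b <;> simp [blkQ, Matrix.fromRows_apply_inl, Matrix.fromRows_apply_inr])

lemma blkQ_herm (ν K : ℕ) {X : Matrix (Fin ν) (Fin ν) ℂ} (hX : X.IsHermitian) :
    (blkQ ν K X).IsHermitian := by
  ext p q
  rcases p with a | b | c <;> rcases q with a' | b' | c' <;>
    simp [blkQ, Matrix.conjTranspose_apply, Matrix.fromCols, Matrix.fromRows_apply_inl, Matrix.fromRows_apply_inr, hX.apply]

theorem stmt_2 (ν K : ℕ) :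
    dualSet (Qset ν K) =
      {Y | ∃ F G : Matrix (Fin ν) (Fin (2 * ν + K)) ℂ,
        ∃ V : Matrix (Fin K) (Fin (2 * ν + K)) ℂ,
          (F * Gᴴ + G * Fᴴ).PosSemidef ∧
          Y = Matrix.fromRows F (Matrix.fromRows G V) *
            (Matrix.fromRows F (Matrix.fromRows G V))ᴴ} := by
  ext Z
  constructor
  · rintro ⟨hZh, hZd⟩
    have hZpsd : Z.PosSemidef := by
      apply psd_of_dual hZh
      intro P hP
      exact hZd P ⟨hP.1, 0, Matrix.PosSemidef.zero, by simpa [blkQ_zero] using hP⟩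
    set W := Z.submatrix Sum.inl (Sum.inr ∘ Sum.inl) +
      Z.submatrix (Sum.inr ∘ Sum.inl) Sum.inl with hW
    have hWh : W.IsHermitian := by
      ext i j
      simp only [hW, Matrix.conjTranspose_apply, Matrix.add_apply, Matrix.submatrix_apply,
        Function.comp, star_add]
      rw [hZh.apply, hZh.apply, add_comm]
    have hWpsd : W.PosSemidef := by
      apply psd_of_dual hWh
      intro X hX
      have := hZd _ ⟨blkQ_herm ν K hX.1, X, hX, by simpa using Matrix.PosSemidef.zero⟩
      rwa [trace_blkQ_mul] at this
    obtain ⟨B, hB⟩ := Matrix.posSemidef_iff_eq_transpose_mul_self.mp hZpsd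
    let e : Fin (2 * ν + K) ≃ (Fin ν ⊕ (Fin ν ⊕ Fin K)) :=
      (finCongr (by omega : 2 * ν + K = ν + (ν + K))).trans
        (finSumFinEquiv.symm.trans ((Equiv.refl (Fin ν)).sumCongr finSumFinEquiv.symm))
    set R : Matrix (Fin ν ⊕ (Fin ν ⊕ Fin K)) (Fin (2 * ν + K)) ℂ :=
      Bᴴ.submatrix id e with hRdef
    have hRR : R * Rᴴ = Z := by
      rw [hRdef, Matrix.conjTranspose_submatrix, Matrix.conjTranspose_conjTranspose]
      rw [Matrix.submatrix_mul_equiv Bᴴ B id e id]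
      rw [hB]
      rfl
    set F : Matrix (Fin ν) (Fin (2 * ν + K)) ℂ :=
      Matrix.of (fun i j => R (Sum.inl i) j) with hF
    set G : Matrix (Fin ν) (Fin (2 * ν + K)) ℂ :=
      Matrix.of (fun i j => R (Sum.inr (Sum.inl i)) j) with hG
    set V : Matrix (Fin K) (Fin (2 * ν + K)) ℂ :=
      Matrix.of (fun i j => R (Sum.inr (Sum.inr i)) j) with hV
    have hRrows : Matrix.fromRows F (Matrix.fromRows G V) = R := by
      ext p j
      rcases p with a | b | c <;> rfl
    have hFG : F * Gᴴ + G * Fᴴ = W := by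
      have h1 : F * Gᴴ = (R * Rᴴ).submatrix Sum.inl (Sum.inr ∘ Sum.inl) := by
        ext a b
        simp [hF, hG, Matrix.mul_apply, Matrix.conjTranspose_apply]
      have h2 : G * Fᴴ = (R * Rᴴ).submatrix (Sum.inr ∘ Sum.inl) Sum.inl := by
        ext a b
        simp [hF, hG, Matrix.mul_apply, Matrix.conjTranspose_apply]
      rw [h1, h2, hRR, hW]
    exact ⟨F, G, V, hFG ▸ hWpsd, by rw [hRrows, hRR]⟩
  · rintro ⟨F, G, V, hFG, rfl⟩
    set R := Matrix.fromRows F (Matrix.fromRows G V) with hR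
    refine ⟨Matrix.isHermitian_mul_conjTranspose_self R, ?_⟩
    rintro Q ⟨hQh, X, hXpsd, hQX⟩
    have hYpsd : (R * Rᴴ).PosSemidef := Matrix.posSemidef_self_mul_conjTranspose R
    have hsplit : Q * (R * Rᴴ) = (Q - blkQ ν K X) * (R * Rᴴ) + blkQ ν K X * (R * Rᴴ) := by
      rw [Matrix.sub_mul]
      abel
    rw [hsplit, Matrix.trace_add, Complex.add_re]
    have t1 : 0 ≤ (((Q - blkQ ν K X) * (R * Rᴴ)).trace).re := by
      have := trace_mul_psd_nonneg hQX hYpsd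
      exact (Complex.le_def.mp this).1
    have t2 : 0 ≤ ((blkQ ν K X * (R * Rᴴ)).trace).re := by
      rw [trace_blkQ_mul]
      have hsub : (R * Rᴴ).submatrix Sum.inl (Sum.inr ∘ Sum.inl) +
          (R * Rᴴ).submatrix (Sum.inr ∘ Sum.inl) Sum.inl = F * Gᴴ + G * Fᴴ := by
        congr 1
      rw [hsub]
      exact (Complex.le_def.mp (trace_mul_psd_nonneg hXpsd hFG)).1
    linarith
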